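/- Let I and K be independent sets of a matroid M, both internally related to a basis C, with K not ≤_{ext/int} I. Then K \ I ⊆ IA(C), K \ I is nonempty, and for any c ∈ K \ I, the set J := K \ {c} is internally related to C with J <_{ext/int} K, and c ∈ EP(I). -/

import Mathlib

open Set

variable {α : Type*}

/-- A circuit of a matroid: a minimal dependent set. -/
def Matroid.Cct (M : Matroid α) (C : Set α) : Prop :=
  M.Dep C ∧ ∀ D ⊂ C, ¬ M.Dep D

/-- The externally active elements with respect to `S`: elements `e ∈ E \ S` that are the
maximum of some circuit contained in `S ∪ {e}`. -/
def Matroid.exA [LinearOrder α] (M : Matroid α) (S : Set α) : Set α :=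
  {e | e ∈ M.E \ S ∧ ∃ C, M.Cct C ∧ C ⊆ insert e S ∧ ∀ f ∈ C, f ≤ e}

/-- The externally passive elements with respect to `S`. -/
def Matroid.exP [LinearOrder α] (M : Matroid α) (S : Set α) : Set α :=
  (M.E \ S) \ M.exA S

/-- The internally active elements with respect to `S`: elements of `S` that are externally
active with respect to `E \ S` in the dual matroid. -/
def Matroid.inA [LinearOrder α] (M : Matroid α) (S : Set α) : Set α :=
  {i | i ∈ S ∧ i ∈ M✶.exA (M.E \ S)}

/-- The internally passive elements with respect to `S`. -/
def Matroid.inP [LinearOrder α] (M : Matroid α) (S : Set α) : Set α :=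
  S \ M.inA S

/-- `I` is internally related to the basis `B` if `I = B \ Y` for some `Y ⊆ IA(B)`. -/
def Matroid.IntRelated [LinearOrder α] (M : Matroid α) (I B : Set α) : Prop :=
  M.IsBase B ∧ ∃ Y ⊆ M.inA B, I = B \ Y

/-- The external/internal order on independent sets. -/
def Matroid.extIntLE [LinearOrder α] (M : Matroid α) (I J : Set α) : Prop :=
  ((∃ B, M.IntRelated I B ∧ M.IntRelated J B) ∧ I ⊆ J) ∨
  ((¬ ∃ B, M.IntRelated I B ∧ M.IntRelated J B) ∧
    (I \ M.inA I) ∪ M.exA I ⊆ (J \ M.inA J) ∪ M.exA J)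

/-- A circuit and a cocircuit cannot meet in exactly one element. -/
lemma cct_inter_dual_cct_ne_singleton (M : Matroid α) {Ct D : Set α} (hCt : M.Cct Ct)
    (hD : M✶.Cct D) (e : α) : Ct ∩ D ≠ {e} := by
  intro h
  have heCt : e ∈ Ct := (h.symm ▸ (mem_singleton e) : e ∈ Ct ∩ D).1
  have heD : e ∈ D := (h.symm ▸ (mem_singleton e) : e ∈ Ct ∩ D).2
  have hCtE : Ct ⊆ M.E := hCt.1.subset_ground
  have hDE : D ⊆ M.E := hD.1.subset_ground
  -- Ct \ {e} is independent
  have hIndep : M.Indep (Ct \ {e}) := by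
    have hss : Ct \ {e} ⊂ Ct := sdiff_singleton_ssubset.2 heCt
    have := hCt.2 _ hss
    rw [Matroid.dep_iff, not_and] at this
    by_contra hi
    exact this hi (diff_subset.trans hCtE)
  -- e ∈ closure (Ct \ {e})
  have hecl : e ∈ M.closure (Ct \ {e}) := by
    rw [hIndep.mem_closure_iff_of_notMem (by simp)]
    rw [insert_diff_singleton, insert_eq_of_mem heCt]
    exact hCt.1
  -- Ct \ {e} ⊆ M.E \ D
  have hsub : Ct \ {e} ⊆ M.E \ D := by
    rintro x ⟨hxCt, hxe⟩
    refine ⟨hCtE hxCt, fun hxD => hxe ?_⟩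
    have : x ∈ Ct ∩ D := ⟨hxCt, hxD⟩
    rwa [h] at this
  have hecl' : e ∈ M.closure (M.E \ D) := M.closure_subset_closure hsub hecl
  -- D \ {e} is coindependent, so M.E \ (D \ {e}) is spanning
  have hcoind : M.Coindep (D \ {e}) := by
    have hss : D \ {e} ⊂ D := sdiff_singleton_ssubset.2 heD
    have := hD.2 _ hss
    rw [Matroid.dep_iff, not_and] at this
    by_contra hi
    exact this hi (diff_subset.trans hDE)
  have hspan : M.Spanning (M.E \ (D \ {e})) := hcoind.compl_spanning
  have hEq : M.E \ (D \ {e}) = insert e (M.E \ D) := by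
    ext x
    simp only [mem_diff, mem_insert_iff, mem_singleton_iff]
    constructor
    · rintro ⟨hx, hx'⟩
      by_cases hxe : x = e
      · exact Or.inl hxe
      · exact Or.inr ⟨hx, fun hxD => hx' ⟨hxD, hxe⟩⟩
    · rintro (rfl | ⟨hx, hxD⟩)
      · exact ⟨hDE heD, fun h' => h'.2 rfl⟩
      · exact ⟨hx, fun h' => hxD h'.1⟩
  -- hence M.E \ D is spanning, so D is coindependent, contradiction
  have hspan' : M.Spanning (M.E \ D) := by
    rw [Matroid.spanning_iff_closure_eq] at hspan ⊢
    rw [hEq, Matroid.closure_insert_eq_of_mem_closure hecl'] at hspan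
    exact hspan
  have : M.Coindep D := (Matroid.coindep_iff_compl_spanning hDE).2 hspan'
  exact hD.1.not_indep this

/-- For internally related independent sets `I, K` with `K ≰ I`: `K \ I ⊆ IA(C)` is
nonempty, and for each `c ∈ K \ I`, `J = K \ {c}` is internally related to `C` with
`J < K`, and `c ∈ EP(I)`. -/
theorem internally_related_shelling_step [LinearOrder α] (M : Matroid α) [M.Finite]
    (I K C : Set α) (hI : M.IntRelated I C) (hK : M.IntRelated K C)
    (hKI : ¬ M.extIntLE K I) :
    K \ I ⊆ M.inA C ∧ (K \ I).Nonempty ∧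
      ∀ c ∈ K \ I,
        M.IntRelated (K \ {c}) C ∧ M.extIntLE (K \ {c}) K ∧ K \ {c} ≠ K ∧
          c ∈ M.exP I := by
  obtain ⟨hC, YI, hYI, hIeq⟩ := hI
  obtain ⟨-, YK, hYK, hKeq⟩ := hK
  have hKC : K ⊆ C := hKeq ▸ diff_subset
  have hIC : I ⊆ C := hIeq ▸ diff_subset
  -- Part 1
  have h1 : K \ I ⊆ M.inA C := by
    rintro x ⟨hxK, hxI⟩
    have hxC : x ∈ C := hKC hxK
    have : x ∈ YI := by
      by_contra hx
      exact hxI (hIeq ▸ ⟨hxC, hx⟩)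
    exact hYI this
  -- Part 2
  have h2 : (K \ I).Nonempty := by
    rw [nonempty_iff_ne_empty]
    intro he
    have hKsubI : K ⊆ I := by rwa [diff_eq_empty] at he
    exact hKI (Or.inl ⟨⟨C, ⟨hC, YK, hYK, hKeq⟩, ⟨hC, YI, hYI, hIeq⟩⟩, hKsubI⟩)
  refine ⟨h1, h2, fun c hc => ?_⟩
  have hcA : c ∈ M.inA C := h1 hc
  have hcK : c ∈ K := hc.1
  have hcI : c ∉ I := hc.2
  have hrel : M.IntRelated (K \ {c}) C := by
    refine ⟨hC, YK ∪ {c}, union_subset hYK (by simpa using hcA), ?_⟩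
    rw [hKeq, diff_diff]
  refine ⟨hrel, Or.inl ⟨⟨C, hrel, ⟨hC, YK, hYK, hKeq⟩⟩, diff_subset⟩, ?_, ?_⟩
  · intro h
    have : c ∉ K \ {c} := by simp
    rw [h] at this
    exact this hcK
  -- c ∈ exP I
  obtain ⟨hcC, ⟨hcE', D, hD, hDsub, hDle⟩⟩ := hcA
  refine ⟨⟨hC.subset_ground hcC, hcI⟩, ?_⟩
  rintro ⟨-, Ct, hCt, hCtsub, hCtle⟩
  -- c ∈ Ct
  have hcCt : c ∈ Ct := by
    by_contra hcCt
    have hCtI : Ct ⊆ I := fun x hx => ((hCtsub hx).resolve_left (fun h => hcCt (h ▸ hx)))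
    have hIind : M.Indep I := by
      rw [hIeq]
      exact hC.indep.subset diff_subset
    exact hCt.1.not_indep (hIind.subset hCtI)
  -- c ∈ D
  have hcD : c ∈ D := by
    by_contra hcD
    have hDsub' : D ⊆ M.E \ C := fun x hx => ((hDsub hx).resolve_left (fun h => hcD (h ▸ hx)))
    have : M✶.Indep D := hC.compl_isBase_dual.indep.subset hDsub'
    exact hD.1.not_indep this
  -- Ct ∩ D = {c}
  have : Ct ∩ D = {c} := by
    apply subset_antisymm
    · rintro x ⟨hxCt, hxD⟩
      by_contra hxc
      have hxI : x ∈ I := (hCtsub hxCt).resolve_left hxc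
      have hxC : x ∈ C := hIC hxI
      exact ((hDsub hxD).resolve_left hxc).2 hxC
    · rintro x rfl
      exact ⟨hcCt, hcD⟩
  exact cct_inter_dual_cct_ne_singleton M hCt hD c this
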